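/- Let V be a finite-dimensional real inner product space, and let M₀, M₁, A : V → V be linear maps with M₀ and M₁ self-adjoint, and suppose M(t) := M₀ - t M₁ is positive definite for all t ∈ [0,1]. Assume D := -(Aᵀ + A + M₁) is positive semidefinite. If u : [0,1] → V is differentiable and satisfies d/dt (M(t) u(t)) = A u(t), then d/dt ⟨M(t) u(t), u(t)⟩ = -⟨D u(t), u(t)⟩ ≤ 0; in particular t ↦ ⟨M(t) u(t), u(t)⟩ is nonincreasing. -/

import Mathlib

open scoped RealInnerProductSpace

theorem semidiscrete_energy_nonincreasing
    {V : Type*} [NormedAddCommGroup V] [InnerProductSpace ℝ V] [FiniteDimensional ℝ V]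
    (M₀ M₁ A : V →ₗ[ℝ] V)
    (hM₀ : LinearMap.IsSymmetric M₀) (hM₁ : LinearMap.IsSymmetric M₁)
    (hMpd : ∀ t ∈ Set.Icc (0 : ℝ) 1, ∀ v : V, v ≠ 0 → 0 < ⟪(M₀ - t • M₁) v, v⟫)
    (hD : ∀ v : V, 0 ≤ ⟪(-(LinearMap.adjoint A + A + M₁)) v, v⟫)
    (u u' : ℝ → V)
    (hu : ∀ t ∈ Set.Icc (0 : ℝ) 1, HasDerivAt u (u' t) t)
    (hode : ∀ t ∈ Set.Icc (0 : ℝ) 1,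
      HasDerivAt (fun τ : ℝ => (M₀ - τ • M₁) (u τ)) (A (u t)) t) :
    ∀ t ∈ Set.Icc (0 : ℝ) 1,
      HasDerivAt (fun τ : ℝ => ⟪(M₀ - τ • M₁) (u τ), u τ⟫)
        (-⟪(-(LinearMap.adjoint A + A + M₁)) (u t), u t⟫) t
      ∧ -⟪(-(LinearMap.adjoint A + A + M₁)) (u t), u t⟫ ≤ 0 := by
  intro t ht
  have hg := hu t ht
  have hf := hode t ht
  -- derivative of M₀ ∘ u
  have hM0d : HasDerivAt (fun τ : ℝ => M₀ (u τ)) (M₀ (u' t)) t :=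
    (LinearMap.toContinuousLinearMap M₀).hasFDerivAt.comp_hasDerivAt t hg
  have hM1d : HasDerivAt (fun τ : ℝ => M₁ (u τ)) (M₁ (u' t)) t :=
    (LinearMap.toContinuousLinearMap M₁).hasFDerivAt.comp_hasDerivAt t hg
  have hid : HasDerivAt (fun τ : ℝ => τ) (1 : ℝ) t := hasDerivAt_id t
  have hsmul : HasDerivAt (fun τ : ℝ => τ • M₁ (u τ))
      (t • M₁ (u' t) + (1 : ℝ) • M₁ (u t)) t := hid.smul hM1d
  have hsub : HasDerivAt (fun τ : ℝ => (M₀ - τ • M₁) (u τ))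
      (M₀ (u' t) - (t • M₁ (u' t) + (1 : ℝ) • M₁ (u t))) t := by
    have := hM0d.sub hsmul
    simpa [LinearMap.sub_apply, LinearMap.smul_apply, Pi.sub_def] using this
  have huniq : A (u t) = M₀ (u' t) - (t • M₁ (u' t) + (1 : ℝ) • M₁ (u t)) :=
    hf.unique hsub
  -- so M(t) u' = A u + M₁ u
  have hMu' : (M₀ - t • M₁) (u' t) = A (u t) + M₁ (u t) := by
    simp only [LinearMap.sub_apply, LinearMap.smul_apply]
    rw [huniq]; module
  have hderiv : HasDerivAt (fun τ : ℝ => ⟪(M₀ - τ • M₁) (u τ), u τ⟫)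
      (⟪(M₀ - t • M₁) (u t), u' t⟫ + ⟪A (u t), u t⟫) t := hf.inner ℝ hg
  have hsymm : LinearMap.IsSymmetric (M₀ - t • M₁) := by
    intro x y
    simp only [LinearMap.sub_apply, LinearMap.smul_apply, inner_sub_left,
      inner_sub_right, real_inner_smul_left, real_inner_smul_right, hM₀ x y, hM₁ x y]
  have key : ⟪(M₀ - t • M₁) (u t), u' t⟫ + ⟪A (u t), u t⟫
      = -⟪(-(LinearMap.adjoint A + A + M₁)) (u t), u t⟫ := by
    rw [hsymm (u t) (u' t), real_inner_comm (u t), hMu']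
    have hadj : ⟪(LinearMap.adjoint A) (u t), u t⟫ = ⟪A (u t), u t⟫ := by
      rw [LinearMap.adjoint_inner_left, real_inner_comm]
    simp only [LinearMap.neg_apply, LinearMap.add_apply, inner_neg_right,
      inner_add_right, inner_neg_left, inner_add_left, hadj]
    have h1 := real_inner_comm (u t) (A (u t))
    have h2 := real_inner_comm (u t) (M₁ (u t))
    have h3 := real_inner_comm (u t) ((LinearMap.adjoint A) (u t))
    linarith
  refine ⟨key ▸ hderiv, ?_⟩
  linarith [hD (u t)]
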